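/- For every n ∈ ℤ, the following operator identity holds on K, relating the (q,t)-Macdonald operator 𝓜ₙ to its dual Whittaker (t → ∞) limits M_m: (t − 1)·𝓜ₙ = Σ_{j=0}^N (−1)ʲ · t^{N−j} · e_j ∘ M_{n−j}, where e_j denotes the operator of multiplication by the j-th elementary symmetric polynomial e_j(x₁,…,x_N). -/

import Mathlib

open scoped BigOperators

noncomputable section

/-- The field `F(x₁,…,x_N)` of rational functions in `N` variables over `F`. -/
abbrev RatF (F : Type) [Field F] (N : ℕ) : Type :=
  FractionRing (MvPolynomial (Fin N) F)

/-- The variable `xᵢ` viewed inside the rational function field. -/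
noncomputable def Xv (F : Type) [Field F] (N : ℕ) (i : Fin N) : RatF F N :=
  algebraMap (MvPolynomial (Fin N) F) (RatF F N) (MvPolynomial.X i)

/-- The generalized Macdonald operator `𝓜ₙ`:
`𝓜ₙ f = Σᵢ xᵢⁿ · (Πⱼ≠ᵢ (t·xᵢ − xⱼ)/(xᵢ − xⱼ)) · Γᵢ(f)`. -/
noncomputable def Mac (F : Type) [Field F] (N : ℕ) (t : F)
    (Γ : Fin N → (RatF F N ≃ₐ[F] RatF F N)) (n : ℤ) (f : RatF F N) : RatF F N :=
  ∑ i : Fin N, Xv F N i ^ n *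
    (∏ j ∈ Finset.univ.erase i, (t • Xv F N i - Xv F N j) / (Xv F N i - Xv F N j)) *
    Γ i f

/-- The dual Whittaker (`t → ∞`) limit of the Macdonald operator:
`Mₙ f = Σᵢ xᵢⁿ · (Πⱼ≠ᵢ xᵢ/(xᵢ − xⱼ)) · Γᵢ(f)`. -/
noncomputable def MacW (F : Type) [Field F] (N : ℕ)
    (Γ : Fin N → (RatF F N ≃ₐ[F] RatF F N)) (n : ℤ) (f : RatF F N) : RatF F N :=
  ∑ i : Fin N, Xv F N i ^ n *
    (∏ j ∈ Finset.univ.erase i, Xv F N i / (Xv F N i - Xv F N j)) * Γ i f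

open Polynomial in
theorem vieta_prod {K : Type*} [CommRing K] {ι : Type*} [DecidableEq ι] (s : Finset ι)
    (x : ι → K) (y : K) :
    ∏ k ∈ s, (y - x k) =
      ∑ j ∈ Finset.range (s.card + 1),
        (-1) ^ j * (∑ I ∈ s.powersetCard j, ∏ i ∈ I, x i) * y ^ (s.card - j) := by
  have h := Multiset.prod_X_sub_X_eq_sum_esymm (s.val.map x)
  have h2 := congrArg (Polynomial.eval y) h
  rw [Polynomial.eval_multiset_prod] at h2
  simp only [Multiset.map_map, Function.comp, Polynomial.eval_sub, Polynomial.eval_X,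
    Polynomial.eval_C, Polynomial.eval_finset_sum, Polynomial.eval_mul, Polynomial.eval_pow,
    Polynomial.eval_neg, Polynomial.eval_one, Multiset.card_map] at h2
  rw [Finset.prod, h2]
  simp_rw [Finset.esymm_map_val, Finset.card, mul_assoc]

/-- `(t−1)·𝓜ₙ = Σ_{j=0}^N (−1)ʲ t^{N−j} e_j ∘ M_{n−j}`, where `e_j` is
multiplication by the `j`-th elementary symmetric polynomial in `x₁,…,x_N`. -/
theorem statement15 (F : Type) [Field F] [CharZero F] (q t : F) (hq : q ≠ 0) (ht : t ≠ 0)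
    (N : ℕ) (hN : 1 ≤ N)
    (Γ : Fin N → (RatF F N ≃ₐ[F] RatF F N))
    (hΓ : ∀ i j : Fin N, Γ i (Xv F N j) = if j = i then q • Xv F N j else Xv F N j)
    (n : ℤ) (f : RatF F N) :
    (t - 1) • Mac F N t Γ n f
      = ∑ j ∈ Finset.range (N + 1),
          ((-1 : F) ^ j * t ^ (N - j)) •
            ((∑ I ∈ Finset.powersetCard j (Finset.univ : Finset (Fin N)),
                ∏ i ∈ I, Xv F N i) * MacW F N Γ (n - j) f) := by
  classical
  have hinj : Function.Injective (algebraMap (MvPolynomial (Fin N) F) (RatF F N)) :=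
    IsFractionRing.injective _ _
  have hx : ∀ k : Fin N, Xv F N k ≠ 0 := fun k =>
    (map_ne_zero_iff _ hinj).mpr (MvPolynomial.X_ne_zero k)
  have hne : ∀ {a b : Fin N}, b ≠ a → Xv F N a - Xv F N b ≠ 0 := by
    intro a b hab
    rw [sub_ne_zero]
    exact fun h => hab (MvPolynomial.X_injective (hinj h)).symm
  simp only [Mac, MacW, Finset.mul_sum, Finset.smul_sum]
  rw [Finset.sum_comm]
  refine Finset.sum_congr rfl fun i _ => ?_
  set X := Xv F N i with hX
  set tK : RatF F N := algebraMap F _ t with htK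
  set D : RatF F N := ∏ k ∈ Finset.univ.erase i, (X - Xv F N k) with hD
  set P : RatF F N := ∏ k ∈ Finset.univ.erase i, (tK * X - Xv F N k) with hP
  have hDne : D ≠ 0 := Finset.prod_ne_zero_iff.mpr fun k hk =>
    hne (Finset.ne_of_mem_erase hk)
  have hcard : (Finset.univ.erase i).card = N - 1 := by
    rw [Finset.card_erase_of_mem (Finset.mem_univ i), Finset.card_univ, Fintype.card_fin]
  -- rewrite the products
  have hprod1 : (∏ k ∈ Finset.univ.erase i, (t • X - Xv F N k) / (X - Xv F N k)) = P / D := by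
    rw [Finset.prod_div_distrib, hP, hD]
    congr 1
    exact Finset.prod_congr rfl fun k _ => by rw [Algebra.smul_def]
  have hprod2 : (∏ k ∈ Finset.univ.erase i, X / (X - Xv F N k)) = X ^ (N - 1) / D := by
    rw [Finset.prod_div_distrib, Finset.prod_const, hcard]
  have key : (tK * X - X) * P
      = ∑ j ∈ Finset.range (N + 1),
          (-1) ^ j * (∑ I ∈ Finset.powersetCard j (Finset.univ : Finset (Fin N)),
            ∏ k ∈ I, Xv F N k) * (tK ^ (N - j) * X ^ (N - j)) := by
    have h0 : (tK * X - X) * P = ∏ k ∈ (Finset.univ : Finset (Fin N)), (tK * X - Xv F N k) := by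
      rw [← Finset.mul_prod_erase Finset.univ _ (Finset.mem_univ i), hP, hX]
    rw [h0, vieta_prod Finset.univ (Xv F N) (tK * X)]
    simp [Finset.card_univ, mul_pow]
  have hXn : X ^ n = X ^ (n - 1) * X := by
    rw [← zpow_add_one₀ (hx i)]; norm_num; rfl
  have step : ∀ j ∈ Finset.range (N + 1),
      ((-1 : F) ^ j * t ^ (N - j)) •
        ((∑ I ∈ Finset.powersetCard j (Finset.univ : Finset (Fin N)), ∏ k ∈ I, Xv F N k) *
          (X ^ (n - (j : ℤ)) * (∏ k ∈ Finset.univ.erase i, X / (X - Xv F N k)) * Γ i f))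
        = ((-1) ^ j * (∑ I ∈ Finset.powersetCard j (Finset.univ : Finset (Fin N)),
              ∏ k ∈ I, Xv F N k) * (tK ^ (N - j) * X ^ (N - j))) *
            (X ^ ((n : ℤ) - 1) / D * Γ i f) := by
    intro j hj
    have hjN : j ≤ N := Nat.lt_succ_iff.mp (Finset.mem_range.mp hj)
    have e1 : (X : RatF F N) ^ (N - 1) = X ^ ((N : ℤ) - 1) := by
      rw [← zpow_natCast]; congr 1; omega
    have e2 : (X : RatF F N) ^ (N - j) = X ^ ((N : ℤ) - j) := by
      rw [← zpow_natCast]; congr 1; omega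
    have hzp' : X ^ (n - (j : ℤ)) * X ^ (N - 1) = X ^ ((n : ℤ) - 1) * X ^ (N - j) := by
      rw [e1, e2, ← zpow_add₀ (hx i), ← zpow_add₀ (hx i)]; congr 1; ring
    have hsub : X ^ (n - (j : ℤ)) * (X ^ (N - 1) / D) = X ^ (N - j) * (X ^ ((n : ℤ) - 1) / D) := by
      rw [mul_div_assoc', hzp', mul_comm (X ^ ((n : ℤ) - 1)) (X ^ (N - j)), mul_div_assoc]
    have hmap : algebraMap F (RatF F N) ((-1 : F) ^ j * t ^ (N - j))
        = (-1) ^ j * tK ^ (N - j) := by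
      rw [map_mul, map_pow, map_pow, map_neg, map_one, htK]
    rw [hprod2, Algebra.smul_def, hmap, hsub]
    ring
  rw [Finset.sum_congr rfl step, ← Finset.sum_mul, ← key, hprod1, Algebra.smul_def,
    map_sub, map_one, ← htK, hXn]
  ring


end
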